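/- If G is a finite abelian group, then the conjugacy supercommuting graph of G is complete, and conversely, if the conjugacy superenhanced power graph of a finite group G is complete then G is cyclic. -/

import Mathlib

open Subgroup

/-- A finite group is not the union of the conjugates of a proper subgroup. -/
lemma cover_conj_eq_top {G : Type*} [Group G] [Finite G] (H : Subgroup G)
    (hc : ∀ g : G, ∃ a : G, a * g * a⁻¹ ∈ H) : H = ⊤ := by
  classical
  cases nonempty_fintype G
  set N := normalizer (H : Set G) with hN
  have hHN : H ≤ N := le_normalizer
  -- conjugate subgroup
  set K : G → Subgroup G := fun a => H.map (MulAut.conj a).toMonoidHom with hK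
  have hmemK : ∀ a g : G, g ∈ K a ↔ a⁻¹ * g * a ∈ H := by
    intro a g
    constructor
    · rintro ⟨h, hh, rfl⟩
      have he : a⁻¹ * ((MulAut.conj a).toMonoidHom h) * a = h := by
        simp [MulAut.conj]; group
      rwa [he]
    · intro h
      exact ⟨a⁻¹ * g * a, h, by simp [mul_assoc]⟩
  have hKwell : ∀ b c : G, b⁻¹ * c ∈ N → K b = K c := by
    intro b c hbc
    ext g
    rw [hmemK, hmemK]
    rw [Subgroup.mem_normalizer_iff] at hbc
    have := hbc (b⁻¹ * g * b)
    constructor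
    · intro h
      have : (b⁻¹ * c) * (c⁻¹ * g * c) * (b⁻¹ * c)⁻¹ = b⁻¹ * g * b := by
        group
      rw [← this] at h
      exact ((hbc _).mpr (by simpa [mul_assoc] using h))
    · intro h
      have h2 := (hbc _).mp h
      have : (b⁻¹ * c) * (c⁻¹ * g * c) * (b⁻¹ * c)⁻¹ = b⁻¹ * g * b := by
        group
      rw [this] at h2
      exact h2
  have hcardK : ∀ a : G, Nat.card (K a) = Nat.card H := by
    intro a
    rw [hK]
    exact (Nat.card_congr (Subgroup.equivMapOfInjective H _ (MulAut.conj a).injective).toEquiv).symm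
  -- every element is in K of a quotient representative
  have hcover : ∀ g : G, ∃ q : G ⧸ N, g ∈ K (Quotient.out q) := by
    intro g
    obtain ⟨a, ha⟩ := hc g
    refine ⟨QuotientGroup.mk a⁻¹, ?_⟩
    have hout : (QuotientGroup.mk (Quotient.out (QuotientGroup.mk a⁻¹ : G ⧸ N)) : G ⧸ N)
        = QuotientGroup.mk a⁻¹ := Quotient.out_eq _
    rw [QuotientGroup.eq] at hout
    rw [hKwell _ _ hout, hmemK]
    simpa [mul_assoc] using ha
  -- counting
  set F : G ⧸ N → Finset G := fun q => ((K (Quotient.out q)) : Set G).toFinset.erase 1 with hF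
  have hsub : (Finset.univ : Finset G) ⊆ insert 1 (Finset.univ.biUnion F) := by
    intro g _
    by_cases hg : g = 1
    · simp [hg]
    · obtain ⟨q, hq⟩ := hcover g
      refine Finset.mem_insert_of_mem ?_
      refine Finset.mem_biUnion.mpr ⟨q, Finset.mem_univ _, ?_⟩
      simp [hF, hg, hq]
  have hcardF : ∀ q : G ⧸ N, (F q).card = Nat.card H - 1 := by
    intro q
    have h1 : (1 : G) ∈ ((K (Quotient.out q)) : Set G).toFinset := by
      simp only [Set.mem_toFinset, SetLike.mem_coe]
      exact (K _).one_mem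
    rw [hF]
    simp only [Finset.card_erase_of_mem h1]
    congr 1
    rw [Set.toFinset_card, ← Nat.card_eq_fintype_card]
    exact hcardK _
  have hcount : Nat.card G ≤ 1 + N.index * (Nat.card H - 1) := by
    calc Nat.card G = (Finset.univ : Finset G).card := by
          simp [Nat.card_eq_fintype_card]
      _ ≤ (insert 1 (Finset.univ.biUnion F)).card := Finset.card_le_card hsub
      _ ≤ 1 + (Finset.univ.biUnion F).card := by
          rw [Nat.add_comm]; exact Finset.card_insert_le _ _
      _ ≤ 1 + ∑ q : G ⧸ N, (F q).card := by
          exact Nat.add_le_add_left (Finset.card_biUnion_le) 1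
      _ = 1 + N.index * (Nat.card H - 1) := by
          rw [Finset.sum_congr rfl (fun q _ => hcardF q), Finset.sum_const,
            Finset.card_univ, smul_eq_mul]
          simp [Subgroup.index, Nat.card_eq_fintype_card]
  -- arithmetic
  have hdvd : N.index ∣ H.index := Subgroup.index_dvd_of_le hHN
  have hmul : H.index * Nat.card H = Nat.card G := Subgroup.index_mul_card H
  have hHpos : 0 < Nat.card H := Nat.card_pos
  have hipos : 0 < H.index := Nat.pos_of_ne_zero Subgroup.index_ne_zero_of_finite
  have hNle : N.index ≤ H.index := Nat.le_of_dvd hipos hdvd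
  have h1 : N.index * (Nat.card H - 1) ≤ H.index * (Nat.card H - 1) :=
    Nat.mul_le_mul_right _ hNle
  have h2 : H.index * (Nat.card H - 1) = H.index * Nat.card H - H.index := by
    rw [Nat.mul_sub, mul_one]
  have hile : H.index ≤ Nat.card G := by
    calc H.index = H.index * 1 := (mul_one _).symm
      _ ≤ H.index * Nat.card H := Nat.mul_le_mul_left _ hHpos
      _ = Nat.card G := hmul
  rw [← Subgroup.index_eq_one]
  omega

theorem stmt_19 (G : Type*) [Group G] [Finite G] :
    ((∀ x y : G, Commute x y) →
      ∀ x y : G, ∃ a b : G, Commute (a⁻¹ * x * a) (b⁻¹ * y * b)) ∧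
    ((∀ x y : G, x ≠ y →
        ∃ a b : G, IsCyclic ↥(Subgroup.closure ({a⁻¹ * x * a, b⁻¹ * y * b} : Set G))) →
      IsCyclic G) := by
  constructor
  · intro h x y
    exact ⟨1, 1, h _ _⟩
  · intro h
    classical
    cases nonempty_fintype G
    -- pick an element of maximal order
    obtain ⟨g, -, hg⟩ := Finset.exists_max_image (Finset.univ : Finset G) orderOf
      ⟨1, Finset.mem_univ 1⟩
    have hgmax : ∀ y : G, orderOf y ≤ orderOf g := fun y => hg y (Finset.mem_univ y)
    -- every element has a conjugate in zpowers g
    have key : ∀ y : G, ∃ a : G, a * y * a⁻¹ ∈ Subgroup.zpowers g := by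
      intro y
      by_cases hy : g = y
      · exact ⟨1, by simp [← hy]⟩
      obtain ⟨a, b, hcyc⟩ := h g y hy
      set C := Subgroup.closure ({a⁻¹ * g * a, b⁻¹ * y * b} : Set G) with hC
      have hg'mem : a⁻¹ * g * a ∈ C := Subgroup.subset_closure (by simp)
      have hy'mem : b⁻¹ * y * b ∈ C := Subgroup.subset_closure (by simp)
      have horderg' : orderOf (a⁻¹ * g * a) = orderOf g := by
        have := orderOf_injective (MulAut.conj a⁻¹).toMonoidHom (MulAut.conj a⁻¹).injective g
        simpa [mul_assoc] using this
      -- order of g divides card C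
      have hdvd : orderOf g ∣ Nat.card C := by
        rw [← horderg', ← Subgroup.orderOf_mk _ hg'mem]
        exact orderOf_dvd_natCard _
      obtain ⟨c, hc⟩ := hcyc.exists_generator
      have hcard : orderOf c = Nat.card C := orderOf_eq_card_of_forall_mem_zpowers hc
      have hcle : Nat.card C ≤ orderOf g := by
        rw [← hcard, ← Subgroup.orderOf_coe c]
        exact hgmax _
      have hcardC : Nat.card C = orderOf g :=
        le_antisymm hcle (Nat.le_of_dvd Nat.card_pos hdvd)
      -- zpowers of g' in C is all of C
      have htop : Subgroup.zpowers (⟨a⁻¹ * g * a, hg'mem⟩ : C) = ⊤ := by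
        apply Subgroup.eq_top_of_card_eq
        rw [Nat.card_zpowers, Subgroup.orderOf_mk, horderg', hcardC]
      have hy'' : (⟨b⁻¹ * y * b, hy'mem⟩ : C) ∈ Subgroup.zpowers (⟨a⁻¹ * g * a, hg'mem⟩ : C) := by
        rw [htop]; trivial
      obtain ⟨k, hk⟩ := hy''
      have hk' : (a⁻¹ * g * a) ^ k = b⁻¹ * y * b := by
        have := congrArg (Subtype.val) hk
        simpa using this
      have hconj : a⁻¹ * g ^ k * a = (a⁻¹ * g * a) ^ k := by
        have := map_zpow (MulAut.conj a⁻¹).toMonoidHom g k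
        simp only [MulEquiv.coe_toMonoidHom, MulAut.conj_apply, inv_inv] at this
        rw [this]
      have h3 : a⁻¹ * g ^ k * a = b⁻¹ * y * b := by rw [hconj, hk']
      refine ⟨a * b⁻¹, ⟨k, ?_⟩⟩
      calc g ^ k = a * (a⁻¹ * g ^ k * a) * a⁻¹ := by group
        _ = a * (b⁻¹ * y * b) * a⁻¹ := by rw [h3]
        _ = a * b⁻¹ * y * (a * b⁻¹)⁻¹ := by group
    have := cover_conj_eq_top (Subgroup.zpowers g) key
    refine ⟨⟨g, fun x => ?_⟩⟩
    have hx : x ∈ (⊤ : Subgroup G) := trivial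
    rw [← this] at hx
    exact hx
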